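/- Consider linear regression with features φ(x) ~ N(0,H) and label y = ⟨φ(x), θ*⟩ + ε with ε ~ N(0,σ²) independent of x. For the per-sample gradient ∇ℓ(z;θ) = φ(x)φ(x)^T(θ - θ*) - φ(x)ε of the squared loss ℓ(z;θ) = (⟨φ(x),θ⟩ - y)²/2, the noise covariance Σ(θ) = E[(∇ℓ - E∇ℓ)(∇ℓ - E∇ℓ)^T] equals H u u^T H + (u^T H u) H + σ² H where u = θ - θ*. Consequently, (2E(θ) + σ²) H ⪯ Σ(θ) ⪯ (4E(θ) + σ²) H, where E(θ) = (1/2)(θ-θ*)^T H (θ-θ*). -/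

import Mathlib

open Matrix MeasureTheory ProbabilityTheory Real
open scoped NNReal ENNReal

section GradNoiseAux

lemma grad_aux_integrable_pow_mul_exp {b : ℝ} (hb : 0 < b) (n : ℕ) :
    Integrable (fun x : ℝ => x ^ n * Real.exp (-b * x ^ 2)) := by
  have hs : (-1 : ℝ) < n := by
    calc (-1:ℝ) < 0 := by norm_num
    _ ≤ n := Nat.cast_nonneg n
  have h := integrable_rpow_mul_exp_neg_mul_sq hb hs
  refine h.congr (Filter.Eventually.of_forall fun x => ?_)
  simp only []
  rw [Real.rpow_natCast]

lemma grad_aux_J_rec {b : ℝ} (hb : 0 < b) (n : ℕ) :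
    (2*b) * ∫ x : ℝ, x ^ (n+2) * Real.exp (-b * x ^ 2) =
      (n+1 : ℝ) * ∫ x : ℝ, x ^ n * Real.exp (-b * x ^ 2) := by
  have hf : ∀ x : ℝ, HasDerivAt (fun x : ℝ => x ^ (n+1) * Real.exp (-b * x ^ 2))
      ((n+1 : ℝ) * (x ^ n * Real.exp (-b*x^2)) - (2*b) * (x^(n+2) * Real.exp (-b*x^2))) x := by
    intro x
    have h1 : HasDerivAt (fun x : ℝ => x ^ (n+1)) ((n+1 : ℝ) * x ^ n) x := by
      simpa using hasDerivAt_pow (n+1) x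
    have h2 : HasDerivAt (fun x : ℝ => Real.exp (-b * x ^ 2))
        (Real.exp (-b*x^2) * (-b * (2*x))) x := by
      simpa using (((hasDerivAt_pow 2 x).const_mul (-b)).exp)
    refine (h1.mul h2).congr_deriv ?_
    ring
  have hint' : Integrable (fun x : ℝ =>
      (n+1 : ℝ) * (x ^ n * Real.exp (-b*x^2)) - (2*b) * (x^(n+2) * Real.exp (-b*x^2))) := by
    exact ((grad_aux_integrable_pow_mul_exp hb n).const_mul _).sub
      ((grad_aux_integrable_pow_mul_exp hb (n+2)).const_mul _)
  have h0 := integral_eq_zero_of_hasDerivAt_of_integrable hf hint'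
    (grad_aux_integrable_pow_mul_exp hb (n+1))
  rw [integral_sub ((grad_aux_integrable_pow_mul_exp hb n).const_mul _)
      ((grad_aux_integrable_pow_mul_exp hb (n+2)).const_mul _),
    integral_const_mul, integral_const_mul] at h0
  linarith

lemma grad_aux_J_one {b : ℝ} (hb : 0 < b) :
    ∫ x : ℝ, x ^ 1 * Real.exp (-b * x ^ 2) = 0 := by
  have hf : ∀ x : ℝ, HasDerivAt (fun x : ℝ => -(2*b)⁻¹ * Real.exp (-b * x ^ 2))
      (x ^ 1 * Real.exp (-b*x^2)) x := by
    intro x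
    have h2 : HasDerivAt (fun x : ℝ => Real.exp (-b * x ^ 2))
        (Real.exp (-b*x^2) * (-b * (2*x))) x := by
      simpa using (((hasDerivAt_pow 2 x).const_mul (-b)).exp)
    refine (h2.const_mul (-(2*b)⁻¹)).congr_deriv ?_
    field_simp
  have h0 := integral_eq_zero_of_hasDerivAt_of_integrable hf
    (grad_aux_integrable_pow_mul_exp hb 1)
    (((integrable_exp_neg_mul_sq hb).const_mul _))
  exact h0

lemma grad_aux_J_two {b : ℝ} (hb : 0 < b) :
    ∫ x : ℝ, x ^ 2 * Real.exp (-b * x ^ 2)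
      = (2*b)⁻¹ * ∫ x : ℝ, x ^ 0 * Real.exp (-b * x ^ 2) := by
  have h := grad_aux_J_rec hb 0
  simp only [Nat.cast_zero, zero_add, one_mul, Nat.reduceAdd] at h
  generalize hA : (∫ x : ℝ, x ^ 2 * Real.exp (-b * x ^ 2)) = A at h ⊢
  generalize hB : (∫ x : ℝ, x ^ 0 * Real.exp (-b * x ^ 2)) = B at h ⊢
  have h2b : (2*b) ≠ 0 := by positivity
  field_simp
  linarith

lemma grad_aux_J_three {b : ℝ} (hb : 0 < b) :
    ∫ x : ℝ, x ^ 3 * Real.exp (-b * x ^ 2) = 0 := by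
  have h := grad_aux_J_rec hb 1
  rw [grad_aux_J_one hb] at h
  simp only [Nat.cast_one, Nat.reduceAdd, mul_zero] at h
  have h2b : (2*b) ≠ 0 := by positivity
  rcases mul_eq_zero.mp h with h' | h'
  · exact absurd h' h2b
  · exact h'

lemma grad_aux_J_four {b : ℝ} (hb : 0 < b) :
    ∫ x : ℝ, x ^ 4 * Real.exp (-b * x ^ 2)
      = 3 * ((2*b)⁻¹)^2 * ∫ x : ℝ, x ^ 0 * Real.exp (-b * x ^ 2) := by
  have h := grad_aux_J_rec hb 2
  simp only [Nat.cast_ofNat, Nat.reduceAdd] at h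
  rw [grad_aux_J_two hb] at h
  generalize hA : (∫ x : ℝ, x ^ 4 * Real.exp (-b * x ^ 2)) = A at h ⊢
  generalize hB : (∫ x : ℝ, x ^ 0 * Real.exp (-b * x ^ 2)) = B at h ⊢
  have h2b : (2*b) ≠ 0 := by positivity
  field_simp at h ⊢
  nlinarith [h]

lemma grad_aux_gaussianPDF_eq_nnreal (v : ℝ≥0) :
    gaussianPDF 0 v = fun x => (((gaussianPDFReal 0 v x).toNNReal : ℝ≥0) : ℝ≥0∞) := rfl

lemma grad_aux_pdf_eq {v : ℝ≥0} (hv : v ≠ 0) (x : ℝ) :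
    gaussianPDFReal 0 v x = (Real.sqrt (2 * π * v))⁻¹ * Real.exp (-(2*(v:ℝ))⁻¹ * x ^ 2) := by
  have hv' : (0:ℝ) < v := lt_of_le_of_ne v.coe_nonneg (by exact_mod_cast (Ne.symm hv))
  rw [gaussianPDFReal]
  have : -(x - 0) ^ 2 / (2 * (v:ℝ)) = -(2*(v:ℝ))⁻¹ * x ^ 2 := by
    field_simp
    ring
  rw [this]

lemma grad_aux_gauss_transfer {v : ℝ≥0} (hv : v ≠ 0) (n : ℕ) :
    ∫ x, x ^ n ∂(gaussianReal 0 v) =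
      (Real.sqrt (2 * π * v))⁻¹ * ∫ x : ℝ, x ^ n * Real.exp (-(2*(v:ℝ))⁻¹ * x ^ 2) := by
  rw [gaussianReal_of_var_ne_zero _ hv, grad_aux_gaussianPDF_eq_nnreal,
    integral_withDensity_eq_integral_smul ((measurable_gaussianPDFReal 0 v).real_toNNReal)]
  rw [← integral_const_mul]
  congr 1
  funext x
  rw [NNReal.smul_def, Real.coe_toNNReal _ (gaussianPDFReal_nonneg 0 v x), smul_eq_mul,
    grad_aux_pdf_eq hv]
  ring

lemma grad_aux_gauss_integrable_pow (v : ℝ≥0) (n : ℕ) :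
    Integrable (fun x : ℝ => x ^ n) (gaussianReal 0 v) := by
  by_cases hv : v = 0
  · subst hv
    rw [gaussianReal_zero_var]
    refine ⟨(measurable_id.pow_const n).aestronglyMeasurable, ?_⟩
    rw [HasFiniteIntegral, lintegral_dirac]
    exact ENNReal.coe_lt_top
  · have hv' : (0:ℝ) < v := lt_of_le_of_ne v.coe_nonneg (by exact_mod_cast (Ne.symm hv))
    have hb : (0:ℝ) < (2*(v:ℝ))⁻¹ := by positivity
    rw [gaussianReal_of_var_ne_zero _ hv, grad_aux_gaussianPDF_eq_nnreal,
      integrable_withDensity_iff_integrable_smul ((measurable_gaussianPDFReal 0 v).real_toNNReal)]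
    have h := ((grad_aux_integrable_pow_mul_exp hb n).const_mul (Real.sqrt (2 * π * v))⁻¹)
    refine h.congr (Filter.Eventually.of_forall fun x => ?_)
    show (Real.sqrt (2*π*v))⁻¹ * (x^n * Real.exp (-(2*(v:ℝ))⁻¹ * x^2))
      = (gaussianPDFReal 0 v x).toNNReal • x^n
    rw [NNReal.smul_def, Real.coe_toNNReal _ (gaussianPDFReal_nonneg 0 v x), smul_eq_mul,
      grad_aux_pdf_eq hv]
    ring

lemma grad_aux_gauss_moments (v : ℝ≥0) :
    (∫ x, x ^ 1 ∂(gaussianReal 0 v)) = 0 ∧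
    (∫ x, x ^ 2 ∂(gaussianReal 0 v)) = v ∧
    (∫ x, x ^ 3 ∂(gaussianReal 0 v)) = 0 ∧
    (∫ x, x ^ 4 ∂(gaussianReal 0 v)) = 3 * (v:ℝ) ^ 2 := by
  by_cases hv : v = 0
  · subst hv
    rw [gaussianReal_zero_var]
    simp [integral_dirac]
  · have hv' : (0:ℝ) < v := lt_of_le_of_ne v.coe_nonneg (by exact_mod_cast (Ne.symm hv))
    have hb : (0:ℝ) < (2*(v:ℝ))⁻¹ := by positivity
    have hvne : (v:ℝ) ≠ 0 := ne_of_gt hv'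
    have hmass : (Real.sqrt (2 * π * v))⁻¹
        * ∫ x : ℝ, x ^ 0 * Real.exp (-(2*(v:ℝ))⁻¹ * x ^ 2) = 1 := by
      have h1 := integral_gaussianPDFReal_eq_one 0 hv
      rw [← h1, ← integral_const_mul]
      congr 1
      funext x
      rw [grad_aux_pdf_eq hv]
      ring
    have hval : (2*((2*(v:ℝ))⁻¹))⁻¹ = (v:ℝ) := by
      rw [mul_inv, inv_inv]
      field_simp
    refine ⟨?_, ?_, ?_, ?_⟩ <;> rw [grad_aux_gauss_transfer hv]
    · rw [grad_aux_J_one hb, mul_zero]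
    · rw [grad_aux_J_two hb, hval]
      linear_combination (v:ℝ) * hmass
    · rw [grad_aux_J_three hb, mul_zero]
    · rw [grad_aux_J_four hb, hval]
      linear_combination (3*(v:ℝ)^2) * hmass

lemma grad_aux_moments_of_map {Ω : Type*} [MeasurableSpace Ω] {μ : Measure Ω} {Y : Ω → ℝ}
    (hY : Measurable Y) {va : ℝ} (hva : 0 ≤ va)
    (hmap : Measure.map Y μ = gaussianReal 0 va.toNNReal) :
    (∀ n : ℕ, Integrable (fun ω => (Y ω)^n) μ) ∧
    (∫ ω, (Y ω)^1 ∂μ = 0) ∧ (∫ ω, (Y ω)^2 ∂μ = va) ∧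
    (∫ ω, (Y ω)^3 ∂μ = 0) ∧ (∫ ω, (Y ω)^4 ∂μ = 3*va^2) := by
  have hcoe : ((va.toNNReal : ℝ≥0) : ℝ) = va := Real.coe_toNNReal _ hva
  have hint : ∀ n : ℕ, Integrable (fun ω => (Y ω)^n) μ := by
    intro n
    have h := grad_aux_gauss_integrable_pow va.toNNReal n
    rw [← hmap] at h
    exact (integrable_map_measure (measurable_id.pow_const n).aestronglyMeasurable
      hY.aemeasurable).mp h
  have him : ∀ n : ℕ, ∫ ω, (Y ω)^n ∂μ = ∫ x, x^n ∂(gaussianReal 0 va.toNNReal) := by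
    intro n
    rw [← hmap]
    exact (integral_map (φ := Y) (f := fun x : ℝ => x ^ n) hY.aemeasurable
      ((measurable_id.pow_const n).aestronglyMeasurable)).symm
  obtain ⟨m1, m2, m3, m4⟩ := grad_aux_gauss_moments va.toNNReal
  refine ⟨hint, ?_, ?_, ?_, ?_⟩
  · rw [him 1, m1]
  · rw [him 2, m2, hcoe]
  · rw [him 3, m3]
  · rw [him 4, m4, hcoe]

lemma grad_aux_abs_mul4_le (x y z w : ℝ) : |x*y*z*w| ≤ x^4 + y^4 + z^4 + w^4 := by
  have h1 : |x*y*z*w| = |x*y| * |z*w| := by rw [← abs_mul]; ring_nf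
  have h2 : |x*y| ≤ (x^2 + y^2)/2 := by
    rw [abs_mul]
    nlinarith [sq_nonneg (|x| - |y|), sq_abs x, sq_abs y, abs_nonneg x, abs_nonneg y]
  have h3 : |z*w| ≤ (z^2 + w^2)/2 := by
    rw [abs_mul]
    nlinarith [sq_nonneg (|z| - |w|), sq_abs z, sq_abs w, abs_nonneg z, abs_nonneg w]
  have h4 : |x*y| * |z*w| ≤ ((x^2 + y^2)/2) * ((z^2 + w^2)/2) :=
    mul_le_mul h2 h3 (abs_nonneg _) (by positivity)
  have h5 : ((x^2 + y^2)/2) * ((z^2 + w^2)/2) ≤ x^4 + y^4 + z^4 + w^4 := by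
    nlinarith [sq_nonneg (x^2 - z^2), sq_nonneg (x^2 - w^2),
      sq_nonneg (y^2 - z^2), sq_nonneg (y^2 - w^2), sq_nonneg (x^2+y^2), sq_nonneg (z^2+w^2)]
  rw [h1]
  linarith

end GradNoiseAux

/-- For linear regression with Gaussian features `φ ~ N(0,H)` and label noise
`ε ~ N(0,σ²)` independent of the features, the covariance `Σ(θ)` of the per-sample
gradient `φ φᵀ (θ-θ*) - φ ε` equals `H u uᵀ H + (uᵀHu) H + σ² H` with `u = θ - θ*`,
and consequently `(2E(θ)+σ²) H ⪯ Σ(θ) ⪯ (4E(θ)+σ²) H` where `E(θ) = ½ uᵀHu`. -/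
theorem gradient_noise_covariance {N : ℕ} {Ω : Type*} [MeasurableSpace Ω]
    (μ : Measure Ω) [IsProbabilityMeasure μ]
    (H : Matrix (Fin N) (Fin N) ℝ) (hH : H.PosSemidef) (σ : ℝ)
    (φ : Ω → Fin N → ℝ) (ε : Ω → ℝ) (hφm : Measurable φ) (hεm : Measurable ε)
    (hGauss : ∀ a : Fin N → ℝ,
      Measure.map (fun ω => a ⬝ᵥ φ ω) μ = gaussianReal 0 (a ⬝ᵥ H.mulVec a).toNNReal)
    (hε : Measure.map ε μ = gaussianReal 0 (σ ^ 2).toNNReal)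
    (hindep : IndepFun φ ε μ)
    (θ θstar : Fin N → ℝ) :
    -- the gradient noise covariance matrix
    let u : Fin N → ℝ := θ - θstar
    let grad : Ω → Fin N → ℝ := fun ω => (φ ω ⬝ᵥ u) • φ ω - ε ω • φ ω
    let Sigmat : Matrix (Fin N) (Fin N) ℝ := fun i j =>
      (∫ ω, grad ω i * grad ω j ∂μ) - H.mulVec u i * H.mulVec u j
    let Eθ : ℝ := (1 / 2) * (u ⬝ᵥ H.mulVec u)
    Sigmat = H * vecMulVec u u * H + (u ⬝ᵥ H.mulVec u) • H + σ ^ 2 • H ∧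
    (Sigmat - (2 * Eθ + σ ^ 2) • H).PosSemidef ∧
    ((4 * Eθ + σ ^ 2) • H - Sigmat).PosSemidef := by
  intro u grad Sigmat Eθ
  have hEθ : Eθ = (1 / 2) * (u ⬝ᵥ H.mulVec u) := rfl
  have hSig : ∀ i j, Sigmat i j
      = (∫ ω, grad ω i * grad ω j ∂μ) - H.mulVec u i * H.mulVec u j := fun i j => rfl
  -- symmetry facts
  have hsymm : ∀ i j, H i j = H j i := by
    intro i j
    have h := congrFun (congrFun hH.1 i) j
    simpa using h.symm
  have hBsymm : ∀ a b : Fin N → ℝ, a ⬝ᵥ H.mulVec b = b ⬝ᵥ H.mulVec a := by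
    intro a b
    simp only [dotProduct, mulVec, dotProduct, Finset.mul_sum]
    rw [Finset.sum_comm]
    exact Finset.sum_congr rfl fun i _ => Finset.sum_congr rfl fun j _ => by
      rw [hsymm j i]; ring
  have hXm : ∀ a : Fin N → ℝ, Measurable (fun ω => a ⬝ᵥ φ ω) := by
    intro a
    simp only [dotProduct]
    exact Finset.measurable_sum _ fun i _ => ((measurable_pi_apply i).comp hφm).const_mul (a i)
  have hBnn : ∀ a : Fin N → ℝ, 0 ≤ a ⬝ᵥ H.mulVec a := fun a => by simpa using hH.dotProduct_mulVec_nonneg a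
  -- moments of the projections
  have hmom := fun a : Fin N → ℝ => grad_aux_moments_of_map (hXm a) (hBnn a) (hGauss a)
  have hInt : ∀ (a : Fin N → ℝ) (n : ℕ), Integrable (fun ω => (a ⬝ᵥ φ ω)^n) μ :=
    fun a => (hmom a).1
  have hm2 : ∀ a : Fin N → ℝ, ∫ ω, (a ⬝ᵥ φ ω)^2 ∂μ = a ⬝ᵥ H.mulVec a :=
    fun a => (hmom a).2.2.1
  have hm4 : ∀ a : Fin N → ℝ, ∫ ω, (a ⬝ᵥ φ ω)^4 ∂μ = 3*(a ⬝ᵥ H.mulVec a)^2 :=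
    fun a => (hmom a).2.2.2.2
  -- moments of the noise
  have hεmom := grad_aux_moments_of_map hεm (sq_nonneg σ) hε
  have hεInt : ∀ n : ℕ, Integrable (fun ω => (ε ω)^n) μ := hεmom.1
  have hεm1 : ∫ ω, ε ω ∂μ = 0 := by
    have h := hεmom.2.1
    simpa [pow_one] using h
  have hεm2 : ∫ ω, (ε ω)^2 ∂μ = σ^2 := hεmom.2.2.1
  -- integrability of products of projections
  have hIntP4 : ∀ a b c d : Fin N → ℝ,
      Integrable (fun ω => (a ⬝ᵥ φ ω)*(b ⬝ᵥ φ ω)*(c ⬝ᵥ φ ω)*(d ⬝ᵥ φ ω)) μ := by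
    intro a b c d
    have hg : Integrable
        (fun ω => (a ⬝ᵥ φ ω)^4 + (b ⬝ᵥ φ ω)^4 + (c ⬝ᵥ φ ω)^4 + (d ⬝ᵥ φ ω)^4) μ :=
      (((hInt a 4).add (hInt b 4)).add (hInt c 4)).add (hInt d 4)
    refine Integrable.mono' hg
      (((((hXm a).mul (hXm b)).mul (hXm c)).mul (hXm d)).aestronglyMeasurable)
      (Filter.Eventually.of_forall fun ω => ?_)
    rw [Real.norm_eq_abs]
    exact grad_aux_abs_mul4_le _ _ _ _
  have hIntP3 : ∀ a b c : Fin N → ℝ,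
      Integrable (fun ω => (a ⬝ᵥ φ ω)*(b ⬝ᵥ φ ω)*(c ⬝ᵥ φ ω)) μ := by
    intro a b c
    have hg : Integrable
        (fun ω => (a ⬝ᵥ φ ω)^4 + (b ⬝ᵥ φ ω)^4 + (c ⬝ᵥ φ ω)^4 + 1) μ :=
      (((hInt a 4).add (hInt b 4)).add (hInt c 4)).add (integrable_const 1)
    refine Integrable.mono' hg
      ((((hXm a).mul (hXm b)).mul (hXm c)).aestronglyMeasurable)
      (Filter.Eventually.of_forall fun ω => ?_)
    rw [Real.norm_eq_abs]
    have h := grad_aux_abs_mul4_le (a ⬝ᵥ φ ω) (b ⬝ᵥ φ ω) (c ⬝ᵥ φ ω) 1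
    simpa using h
  have hIntP2 : ∀ a b : Fin N → ℝ,
      Integrable (fun ω => (a ⬝ᵥ φ ω)*(b ⬝ᵥ φ ω)) μ := by
    intro a b
    have hg : Integrable (fun ω => (a ⬝ᵥ φ ω)^4 + (b ⬝ᵥ φ ω)^4 + 1 + 1) μ :=
      (((hInt a 4).add (hInt b 4)).add (integrable_const 1)).add (integrable_const 1)
    refine Integrable.mono' hg
      (((hXm a).mul (hXm b)).aestronglyMeasurable)
      (Filter.Eventually.of_forall fun ω => ?_)
    rw [Real.norm_eq_abs]
    have h := grad_aux_abs_mul4_le (a ⬝ᵥ φ ω) (b ⬝ᵥ φ ω) 1 1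
    simpa using h
  -- second mixed moment
  have hm11 : ∀ a b : Fin N → ℝ, ∫ ω, (a ⬝ᵥ φ ω)*(b ⬝ᵥ φ ω) ∂μ = a ⬝ᵥ H.mulVec b := by
    intro a b
    have e : (fun ω => (a ⬝ᵥ φ ω)*(b ⬝ᵥ φ ω))
        = fun ω => (1/2) * (((a+b) ⬝ᵥ φ ω)^2 - (a ⬝ᵥ φ ω)^2 - (b ⬝ᵥ φ ω)^2) := by
      funext ω
      rw [add_dotProduct]
      ring
    have hsub : Integrable (fun ω => ((a+b) ⬝ᵥ φ ω)^2 - (a ⬝ᵥ φ ω)^2) μ :=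
      (hInt (a+b) 2).sub (hInt a 2)
    rw [e, integral_const_mul, integral_sub hsub (hInt b 2),
      integral_sub (hInt (a+b) 2) (hInt a 2), hm2, hm2, hm2]
    have hexp : (a+b) ⬝ᵥ H.mulVec (a+b)
        = a ⬝ᵥ H.mulVec a + 2*(a ⬝ᵥ H.mulVec b) + b ⬝ᵥ H.mulVec b := by
      simp only [mulVec_add, dotProduct_add, add_dotProduct]
      rw [hBsymm b a]
      ring
    rw [hexp]
    ring
  -- fourth mixed moment (Isserlis via polarization)
  have hm22 : ∀ a b : Fin N → ℝ, ∫ ω, (a ⬝ᵥ φ ω)^2*(b ⬝ᵥ φ ω)^2 ∂μ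
      = (a ⬝ᵥ H.mulVec a)*(b ⬝ᵥ H.mulVec b) + 2*(a ⬝ᵥ H.mulVec b)^2 := by
    intro a b
    set α := a ⬝ᵥ H.mulVec a with hα
    set β := a ⬝ᵥ H.mulVec b with hβ
    set γ := b ⬝ᵥ H.mulVec b with hγ
    set S1 := ∫ ω, (a ⬝ᵥ φ ω)^3*(b ⬝ᵥ φ ω) ∂μ with hS1
    set S2 := ∫ ω, (a ⬝ᵥ φ ω)^2*(b ⬝ᵥ φ ω)^2 ∂μ with hS2
    set S3 := ∫ ω, (a ⬝ᵥ φ ω)*(b ⬝ᵥ φ ω)^3 ∂μ with hS3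
    have hI31 : Integrable (fun ω => (a ⬝ᵥ φ ω)^3*(b ⬝ᵥ φ ω)) μ :=
      (hIntP4 a a a b).congr (Filter.Eventually.of_forall fun ω => by ring)
    have hI22 : Integrable (fun ω => (a ⬝ᵥ φ ω)^2*(b ⬝ᵥ φ ω)^2) μ :=
      (hIntP4 a a b b).congr (Filter.Eventually.of_forall fun ω => by ring)
    have hI13 : Integrable (fun ω => (a ⬝ᵥ φ ω)*(b ⬝ᵥ φ ω)^3) μ :=
      (hIntP4 a b b b).congr (Filter.Eventually.of_forall fun ω => by ring)
    have key : ∀ t : ℝ,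
        3*α^2 + (4*t)*S1 + (6*t^2)*S2 + (4*t^3)*S3 + (t^4)*(3*γ^2)
          = 3*(α + 2*β*t + γ*t^2)^2 := by
      intro t
      have hL : ∫ ω, ((a + t•b) ⬝ᵥ φ ω)^4 ∂μ
          = 3*α^2 + (4*t)*S1 + (6*t^2)*S2 + (4*t^3)*S3 + (t^4)*(3*γ^2) := by
        have e : (fun ω => ((a + t•b) ⬝ᵥ φ ω)^4)
            = fun ω => (a ⬝ᵥ φ ω)^4 + ((4*t)*((a ⬝ᵥ φ ω)^3*(b ⬝ᵥ φ ω))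
              + ((6*t^2)*((a ⬝ᵥ φ ω)^2*(b ⬝ᵥ φ ω)^2) + ((4*t^3)*((a ⬝ᵥ φ ω)*(b ⬝ᵥ φ ω)^3)
              + (t^4)*((b ⬝ᵥ φ ω)^4)))) := by
          funext ω
          rw [add_dotProduct, smul_dotProduct]
          simp only [smul_eq_mul]
          ring
        have hA4 : Integrable (fun ω => (4*t^3)*((a ⬝ᵥ φ ω)*(b ⬝ᵥ φ ω)^3)
            + (t^4)*((b ⬝ᵥ φ ω)^4)) μ := (hI13.const_mul _).add ((hInt b 4).const_mul _)
        have hA3 : Integrable (fun ω => (6*t^2)*((a ⬝ᵥ φ ω)^2*(b ⬝ᵥ φ ω)^2)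
            + ((4*t^3)*((a ⬝ᵥ φ ω)*(b ⬝ᵥ φ ω)^3) + (t^4)*((b ⬝ᵥ φ ω)^4))) μ :=
          (hI22.const_mul _).add hA4
        have hA2 : Integrable (fun ω => (4*t)*((a ⬝ᵥ φ ω)^3*(b ⬝ᵥ φ ω))
            + ((6*t^2)*((a ⬝ᵥ φ ω)^2*(b ⬝ᵥ φ ω)^2) + ((4*t^3)*((a ⬝ᵥ φ ω)*(b ⬝ᵥ φ ω)^3)
            + (t^4)*((b ⬝ᵥ φ ω)^4)))) μ := (hI31.const_mul _).add hA3
        rw [e,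
          integral_add (hInt a 4) hA2,
          integral_add (hI31.const_mul _) hA3,
          integral_add (hI22.const_mul _) hA4,
          integral_add (hI13.const_mul _) ((hInt b 4).const_mul _),
          integral_const_mul, integral_const_mul, integral_const_mul, integral_const_mul,
          hm4 a, hm4 b, ← hS1, ← hS2, ← hS3, ← hα, ← hγ]
        ring
      have hR : ∫ ω, ((a + t•b) ⬝ᵥ φ ω)^4 ∂μ = 3*(α + 2*β*t + γ*t^2)^2 := by
        rw [hm4 (a + t•b)]
        have hq : (a + t•b) ⬝ᵥ H.mulVec (a + t•b) = α + 2*β*t + γ*t^2 := by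
          simp only [mulVec_add, mulVec_smul, dotProduct_add, add_dotProduct,
            dotProduct_smul, smul_dotProduct, smul_eq_mul]
          rw [hBsymm b a, ← hα, ← hβ, ← hγ]
          ring
        rw [hq]
      rw [← hL, hR]
    have k1 := key 1
    have k2 := key (-1)
    linear_combination (k1 + k2) / 12
  -- E[X_a^2 X_b X_c]
  have hm211 : ∀ a b c : Fin N → ℝ, ∫ ω, (a ⬝ᵥ φ ω)^2*(b ⬝ᵥ φ ω)*(c ⬝ᵥ φ ω) ∂μ
      = (a ⬝ᵥ H.mulVec a)*(b ⬝ᵥ H.mulVec c)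
        + 2*(a ⬝ᵥ H.mulVec b)*(a ⬝ᵥ H.mulVec c) := by
    intro a b c
    have hI1 : Integrable (fun ω => (a ⬝ᵥ φ ω)^2*((b+c) ⬝ᵥ φ ω)^2) μ :=
      (hIntP4 a a (b+c) (b+c)).congr (Filter.Eventually.of_forall fun ω => by ring)
    have hI2 : Integrable (fun ω => (a ⬝ᵥ φ ω)^2*((b-c) ⬝ᵥ φ ω)^2) μ :=
      (hIntP4 a a (b-c) (b-c)).congr (Filter.Eventually.of_forall fun ω => by ring)
    have e : (fun ω => (a ⬝ᵥ φ ω)^2*(b ⬝ᵥ φ ω)*(c ⬝ᵥ φ ω))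
        = fun ω => (1/4)*((a ⬝ᵥ φ ω)^2*((b+c) ⬝ᵥ φ ω)^2
            - (a ⬝ᵥ φ ω)^2*((b-c) ⬝ᵥ φ ω)^2) := by
      funext ω
      rw [add_dotProduct, sub_dotProduct]
      ring
    rw [e, integral_const_mul, integral_sub hI1 hI2, hm22, hm22]
    have h1 : a ⬝ᵥ H.mulVec (b+c) = a ⬝ᵥ H.mulVec b + a ⬝ᵥ H.mulVec c := by
      simp only [mulVec_add, dotProduct_add]
    have h2 : a ⬝ᵥ H.mulVec (b-c) = a ⬝ᵥ H.mulVec b - a ⬝ᵥ H.mulVec c := by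
      simp only [mulVec_sub, dotProduct_sub]
    have h3 : (b+c) ⬝ᵥ H.mulVec (b+c)
        = b ⬝ᵥ H.mulVec b + 2*(b ⬝ᵥ H.mulVec c) + c ⬝ᵥ H.mulVec c := by
      simp only [mulVec_add, dotProduct_add, add_dotProduct]
      rw [hBsymm c b]
      ring
    have h4 : (b-c) ⬝ᵥ H.mulVec (b-c)
        = b ⬝ᵥ H.mulVec b - 2*(b ⬝ᵥ H.mulVec c) + c ⬝ᵥ H.mulVec c := by
      simp only [mulVec_sub, dotProduct_sub, sub_dotProduct]
      rw [hBsymm c b]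
      ring
    rw [h1, h2, h3, h4]
    ring
  -- quadratic-form entries of H * u uᵀ * H
  have hquad : ∀ i j, (H * vecMulVec u u * H) i j = H.mulVec u i * H.mulVec u j := by
    intro i j
    simp only [mul_apply, vecMulVec_apply, mulVec, dotProduct]
    rw [Finset.sum_mul_sum]
    simp only [Finset.sum_mul]
    rw [Finset.sum_comm]
    refine Finset.sum_congr rfl fun k _ => Finset.sum_congr rfl fun l _ => ?_
    rw [hsymm l j]
    ring
  -- helper facts about basis vectors
  have hei : ∀ (k : Fin N) (ω : Ω), (Pi.single k 1 : Fin N → ℝ) ⬝ᵥ φ ω = φ ω k :=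
    fun k ω => by rw [single_dotProduct, one_mul]
  have hBuei : ∀ k : Fin N, u ⬝ᵥ H.mulVec (Pi.single k 1) = H.mulVec u k := by
    intro k
    rw [hBsymm, single_dotProduct, one_mul]
  have hBeiej : ∀ i j : Fin N,
      (Pi.single i 1 : Fin N → ℝ) ⬝ᵥ H.mulVec (Pi.single j 1) = H i j := by
    intro i j
    rw [single_dotProduct, one_mul]
    simp [mulVec, dotProduct, Pi.single_apply]
  -- the main entrywise integral computation
  have hentry : ∀ i j, (∫ ω, grad ω i * grad ω j ∂μ)
      = (u ⬝ᵥ H.mulVec u)*(H i j) + 2*(H.mulVec u i)*(H.mulVec u j) + H i j * σ^2 := by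
    intro i j
    have hgrad : ∀ ω, grad ω i * grad ω j =
        ((u ⬝ᵥ φ ω)^2*((Pi.single i 1 : Fin N → ℝ) ⬝ᵥ φ ω)*((Pi.single j 1 : Fin N → ℝ) ⬝ᵥ φ ω))
        - 2*(((u ⬝ᵥ φ ω)*(φ ω i)*(φ ω j)) * ε ω)
        + ((φ ω i * φ ω j) * (ε ω)^2) := by
      intro ω
      show ((φ ω ⬝ᵥ u) • φ ω - ε ω • φ ω) i * ((φ ω ⬝ᵥ u) • φ ω - ε ω • φ ω) j = _
      simp only [Pi.sub_apply, Pi.smul_apply, smul_eq_mul, hei]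
      rw [dotProduct_comm (φ ω) u]
      ring
    have hT1 : Integrable (fun ω => (u ⬝ᵥ φ ω)^2
        *((Pi.single i 1 : Fin N → ℝ) ⬝ᵥ φ ω)*((Pi.single j 1 : Fin N → ℝ) ⬝ᵥ φ ω)) μ :=
      (hIntP4 u u (Pi.single i 1) (Pi.single j 1)).congr
        (Filter.Eventually.of_forall fun ω => by ring)
    have hFm : Measurable (fun p : Fin N → ℝ => (u ⬝ᵥ p)*(p i)*(p j)) := by
      have hdp : Measurable (fun p : Fin N → ℝ => u ⬝ᵥ p) := by
        simp only [dotProduct]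
        exact Finset.measurable_sum _ fun k _ => by fun_prop
      exact (hdp.mul (measurable_pi_apply i)).mul (measurable_pi_apply j)
    have hGm : Measurable (fun p : Fin N → ℝ => (p i)*(p j)) :=
      (measurable_pi_apply i).mul (measurable_pi_apply j)
    have hind1 : IndepFun (fun ω => (u ⬝ᵥ φ ω)*(φ ω i)*(φ ω j)) ε μ :=
      hindep.comp hFm measurable_id
    have hind2 : IndepFun (fun ω => (φ ω i)*(φ ω j)) (fun ω => (ε ω)^2) μ :=
      hindep.comp hGm (measurable_id.pow_const 2)
    have htriple : Integrable (fun ω => (u ⬝ᵥ φ ω)*(φ ω i)*(φ ω j)) μ := by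
      have h := hIntP3 u (Pi.single i 1) (Pi.single j 1)
      refine h.congr (Filter.Eventually.of_forall fun ω => ?_)
      simp only [hei]
    have hpair : Integrable (fun ω => (φ ω i)*(φ ω j)) μ := by
      have h := hIntP2 (Pi.single i 1) (Pi.single j 1)
      refine h.congr (Filter.Eventually.of_forall fun ω => ?_)
      simp only [hei]
    have hT2 : Integrable (fun ω => ((u ⬝ᵥ φ ω)*(φ ω i)*(φ ω j)) * ε ω) μ :=
      hind1.integrable_mul htriple
        ((hεInt 1).congr (Filter.Eventually.of_forall fun ω => pow_one _))
    have hT3 : Integrable (fun ω => ((φ ω i)*(φ ω j)) * (ε ω)^2) μ :=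
      hind2.integrable_mul hpair (hεInt 2)
    have hTsub : Integrable (fun ω => (u ⬝ᵥ φ ω)^2
        *((Pi.single i 1 : Fin N → ℝ) ⬝ᵥ φ ω)*((Pi.single j 1 : Fin N → ℝ) ⬝ᵥ φ ω)
        - 2*((u ⬝ᵥ φ ω)*(φ ω i)*(φ ω j) * ε ω)) μ := hT1.sub (hT2.const_mul 2)
    rw [integral_congr_ae (Filter.Eventually.of_forall hgrad),
      integral_add hTsub hT3,
      integral_sub hT1 (hT2.const_mul 2), integral_const_mul]
    have hT1val : ∫ ω, (u ⬝ᵥ φ ω)^2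
        *((Pi.single i 1 : Fin N → ℝ) ⬝ᵥ φ ω)*((Pi.single j 1 : Fin N → ℝ) ⬝ᵥ φ ω) ∂μ
        = (u ⬝ᵥ H.mulVec u)*(H i j) + 2*(H.mulVec u i)*(H.mulVec u j) := by
      rw [hm211 u (Pi.single i 1) (Pi.single j 1), hBeiej, hBuei, hBuei]
    have hT2val : ∫ ω, ((u ⬝ᵥ φ ω)*(φ ω i)*(φ ω j)) * ε ω ∂μ = 0 := by
      rw [hind1.integral_fun_mul_eq_mul_integral (hFm.comp hφm).aestronglyMeasurable hεm.aestronglyMeasurable,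
        hεm1, mul_zero]
    have hT3val : ∫ ω, ((φ ω i)*(φ ω j)) * (ε ω)^2 ∂μ = H i j * σ^2 := by
      rw [hind2.integral_fun_mul_eq_mul_integral (hGm.comp hφm).aestronglyMeasurable
        ((hεm.pow_const 2).aestronglyMeasurable), hεm2]
      have hp : ∫ ω, φ ω i * φ ω j ∂μ = H i j := by
        have h := hm11 (Pi.single i 1) (Pi.single j 1)
        rw [hBeiej] at h
        rw [← h]
        refine integral_congr_ae (Filter.Eventually.of_forall fun ω => ?_)
        simp only [hei]
      rw [hp]
    rw [hT1val, hT2val, hT3val]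
    ring
  -- the covariance formula
  have heq : Sigmat = H * vecMulVec u u * H + (u ⬝ᵥ H.mulVec u) • H + σ ^ 2 • H := by
    ext i j
    rw [hSig i j, hentry i j]
    simp only [Matrix.add_apply, Matrix.smul_apply, smul_eq_mul]
    rw [hquad i j]
    ring
  -- Cauchy-Schwarz for the form B
  have hCS : ∀ a b : Fin N → ℝ,
      (a ⬝ᵥ H.mulVec b)^2 ≤ (a ⬝ᵥ H.mulVec a) * (b ⬝ᵥ H.mulVec b) := by
    intro a b
    set A := a ⬝ᵥ H.mulVec a with hA
    set B := a ⬝ᵥ H.mulVec b with hB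
    set C := b ⬝ᵥ H.mulVec b with hC
    have hq : ∀ t : ℝ, 0 ≤ A*t^2 + 2*B*t + C := by
      intro t
      have h0 := hH.dotProduct_mulVec_nonneg (t • a + b)
      simp only [star_trivial, mulVec_add, mulVec_smul, add_dotProduct, smul_dotProduct,
        dotProduct_add, dotProduct_smul, smul_eq_mul] at h0
      rw [hBsymm b a] at h0
      rw [← hA, ← hB, ← hC] at h0
      nlinarith [h0]
    have hA0 : 0 ≤ A := hBnn a
    rcases eq_or_lt_of_le hA0 with hA0' | hA0'
    · have hB0 : B = 0 := by
        by_contra hB0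
        have h1 := hq (-(C + 1)/(2*B))
        rw [← hA0'] at h1
        have hexp : (0:ℝ)*(-(C + 1)/(2*B))^2 + 2*B*(-(C + 1)/(2*B)) + C = -1 := by
          field_simp
          ring
        rw [hexp] at h1
        linarith
      rw [hB0, ← hA0']
      norm_num
    · have h1 := hq (-B/A)
      have hAne : A ≠ 0 := ne_of_gt hA0'
      have hexp : A*(-B/A)^2 + 2*B*(-B/A) + C = C - B^2/A := by
        field_simp
        ring
      rw [hexp] at h1
      have h3 : B^2 ≤ C*A := (div_le_iff₀ hA0').mp (by linarith)
      linarith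
  -- PSD of vecMulVec w w
  have hvvmul : ∀ w x : Fin N → ℝ, (vecMulVec w w).mulVec x = (w ⬝ᵥ x) • w := by
    intro w x
    funext k
    simp only [mulVec, vecMulVec_apply, dotProduct, Pi.smul_apply, smul_eq_mul, Finset.mul_sum]
    rw [Finset.sum_mul]
    exact Finset.sum_congr rfl fun m _ => by ring
  have hPSDvv : ∀ w : Fin N → ℝ, (vecMulVec w w).PosSemidef := by
    intro w
    rw [posSemidef_iff_dotProduct_mulVec]
    constructor
    · show (vecMulVec w w)ᴴ = vecMulVec w w
      ext i j
      simp [conjTranspose_apply, vecMulVec_apply, mul_comm]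
    · intro x
      rw [hvvmul]
      simp only [star_trivial, dotProduct_smul, smul_eq_mul]
      rw [dotProduct_comm]
      exact mul_self_nonneg _
  refine ⟨heq, ?_, ?_⟩
  · have h2 : Sigmat - (2 * Eθ + σ ^ 2) • H = vecMulVec (H.mulVec u) (H.mulVec u) := by
      rw [heq, hEθ]
      ext i j
      simp only [Matrix.sub_apply, Matrix.add_apply, Matrix.smul_apply, smul_eq_mul,
        vecMulVec_apply]
      rw [hquad i j]
      ring
    rw [h2]
    exact hPSDvv _
  · have h3 : (4 * Eθ + σ ^ 2) • H - Sigmat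
        = (u ⬝ᵥ H.mulVec u) • H - vecMulVec (H.mulVec u) (H.mulVec u) := by
      rw [heq, hEθ]
      ext i j
      simp only [Matrix.sub_apply, Matrix.add_apply, Matrix.smul_apply, smul_eq_mul,
        vecMulVec_apply]
      rw [hquad i j]
      ring
    rw [h3]
    rw [posSemidef_iff_dotProduct_mulVec]
    constructor
    · show ((u ⬝ᵥ H.mulVec u) • H - vecMulVec (H.mulVec u) (H.mulVec u))ᴴ = _
      ext i j
      simp only [conjTranspose_apply, Matrix.sub_apply, Matrix.smul_apply, vecMulVec_apply,
        smul_eq_mul, star_trivial]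
      rw [hsymm j i]
      ring
    · intro x
      rw [sub_mulVec, dotProduct_sub, hvvmul, smul_mulVec]
      simp only [star_trivial, dotProduct_smul, smul_eq_mul]
      have h5 : H.mulVec u ⬝ᵥ x = u ⬝ᵥ H.mulVec x := by
        rw [dotProduct_comm, hBsymm x u]
      have h6 : x ⬝ᵥ H.mulVec u = u ⬝ᵥ H.mulVec x := hBsymm x u
      rw [h5, h6]
      have h7 := hCS u x
      have h8 : x ⬝ᵥ H.mulVec x = x ⬝ᵥ H.mulVec x := rfl
      nlinarith [h7]
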